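/- Let U_n = U_n(s,t) be the n×n upper Hessenberg matrix with subdiagonal s, entry t at positions (i,j) with j ≥ i and j−i even, and 0 elsewhere above the diagonal. Let U_n^{(rc)} be the matrix obtained by swapping the first two rows and the last two columns of a suitable modification so that P_n^{(r)} · U_n^{(rc)} · P_n^{(c)} equals U_n except its (1,1) entry is s instead of t, its (2,1) entry is t instead of s, its (n−1,n) entry is 0 with (n−1,n−1) entry t, and its (n,n−1) entry is t with (n,n) entry s. Then for n ≥ 4, det(U_n^{(rc)}) = s²·det(U_{n−2}) + 2ts²·det(U_{n−3}) + t²s²·det(U_{n−4}), where det(U_0) := 0. -/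

import Mathlib

/-- The upper Hessenberg matrix `U_n(s,t)`. -/
def hessU (s t : ℝ) (n : ℕ) : Matrix (Fin n) (Fin n) ℝ :=
  fun i j =>
    if (i : ℕ) ≤ (j : ℕ) then (if ((j : ℕ) - (i : ℕ)) % 2 = 0 then t else 0)
    else if (i : ℕ) = (j : ℕ) + 1 then s else 0

/-- `det(U_n)` with the convention `det(U_0) := 0`. -/
noncomputable def detU (s t : ℝ) (n : ℕ) : ℝ :=
  if n = 0 then 0 else (hessU s t n).det

/-- Permutation matrix swapping the first two rows of the identity. -/
def permR (n : ℕ) : Matrix (Fin n) (Fin n) ℝ :=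
  fun i j =>
    if ((i : ℕ) = 0 ∧ (j : ℕ) = 1) ∨ ((i : ℕ) = 1 ∧ (j : ℕ) = 0) then 1
    else if (i : ℕ) = (j : ℕ) ∧ 2 ≤ (i : ℕ) then 1 else 0

/-- Permutation matrix swapping the last two columns of the identity. -/
def permC (n : ℕ) : Matrix (Fin n) (Fin n) ℝ :=
  fun i j =>
    if ((i : ℕ) = n - 2 ∧ (j : ℕ) = n - 1) ∨ ((i : ℕ) = n - 1 ∧ (j : ℕ) = n - 2) then 1
    else if (i : ℕ) = (j : ℕ) ∧ (i : ℕ) < n - 2 then 1 else 0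

/-- The matrix `B` equal to `U_n` except that its `(1,1)` entry is `s`, its
`(2,1)` entry is `t`, its `(n,n-1)` entry is `t` and its `(n,n)` entry is `s`
(1-indexed); its `(n-1,n)` entry is `0` and `(n-1,n-1)` entry is `t` as in `U_n`. -/
def matB (s t : ℝ) (n : ℕ) : Matrix (Fin n) (Fin n) ℝ :=
  fun i j =>
    if (i : ℕ) = 0 ∧ (j : ℕ) = 0 then s
    else if (i : ℕ) = 1 ∧ (j : ℕ) = 0 then t
    else if (i : ℕ) = n - 1 ∧ (j : ℕ) = n - 2 then t
    else if (i : ℕ) = n - 1 ∧ (j : ℕ) = n - 1 then s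
    else hessU s t n i j

/-- `U_n^{(rc)} = P_n^{(r)} ⬝ B ⬝ P_n^{(c)}`. -/
noncomputable def hessUrc (s t : ℝ) (n : ℕ) : Matrix (Fin n) (Fin n) ℝ :=
  permR n * matB s t n * permC n

/-! ### Auxiliary matrices -/

/-- `U_k` with first row replaced by the pattern `(0,t,0,t,…)`. -/
def matV (s t : ℝ) (k : ℕ) : Matrix (Fin k) (Fin k) ℝ :=
  fun i j =>
    if (i : ℕ) = 0 then (if (j : ℕ) % 2 = 1 then t else 0)
    else hessU s t k i j

/-- `U_k` with bottom-right corner entries swapped. -/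
def matC (s t : ℝ) (k : ℕ) : Matrix (Fin k) (Fin k) ℝ :=
  fun i j =>
    if (i : ℕ) = k - 1 ∧ (j : ℕ) = k - 2 then t
    else if (i : ℕ) = k - 1 ∧ (j : ℕ) = k - 1 then s
    else hessU s t k i j

/-- `matV` with bottom-right corner entries swapped. -/
def matVC (s t : ℝ) (k : ℕ) : Matrix (Fin k) (Fin k) ℝ :=
  fun i j =>
    if (i : ℕ) = k - 1 ∧ (j : ℕ) = k - 2 then t
    else if (i : ℕ) = k - 1 ∧ (j : ℕ) = k - 1 then s
    else matV s t k i j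

lemma val_succAbove {m : ℕ} (i : Fin (m+1)) (j : Fin m) :
    ((i.succAbove j : Fin (m+1)) : ℕ) = if (j:ℕ) < (i:ℕ) then (j:ℕ) else (j:ℕ)+1 := by
  unfold Fin.succAbove
  try simp only [Nat.succ_ne_zero, false_and, and_false, true_and, and_true, if_false, if_true]
  try split_ifs with h1 h2 h3
  · rfl
  · exact absurd (by simpa [Fin.lt_def] using h1) h2
  · exact absurd (by simpa [Fin.lt_def] using h3) h1
  · rfl

lemma det_expand_two {m : ℕ} (M : Matrix (Fin (m+2)) (Fin (m+2)) ℝ)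
    (h : ∀ i : Fin (m+2), 2 ≤ (i:ℕ) → M i 0 = 0) :
    M.det = M 0 0 * (M.submatrix (Fin.succAbove 0) Fin.succ).det
        - M 1 0 * (M.submatrix (Fin.succAbove 1) Fin.succ).det := by
  rw [Matrix.det_succ_column_zero]
  rw [Fintype.sum_eq_add (0 : Fin (m+2)) 1 (by simp [Fin.ext_iff]) ?_]
  · norm_num [Fin.succAbove_zero]; ring
  · rintro c ⟨hc0, hc1⟩
    have h0 : (c:ℕ) ≠ 0 := fun h => hc0 (Fin.ext h)
    have h1 : (c:ℕ) ≠ 1 := fun h => hc1 (Fin.ext h)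
    rw [h c (by omega), mul_zero, zero_mul]

lemma det_expand_one {m : ℕ} (M : Matrix (Fin (m+2)) (Fin (m+2)) ℝ)
    (h0 : M 0 0 = 0)
    (h : ∀ i : Fin (m+2), 2 ≤ (i:ℕ) → M i 0 = 0) :
    M.det = -(M 1 0 * (M.submatrix (Fin.succAbove 1) Fin.succ).det) := by
  rw [det_expand_two M h, h0]; ring

section aux
variable (s t : ℝ)

/-- values of `succAbove 1` -/
lemma val_succAbove_one {m : ℕ} (j : Fin (m+1)) :
    (((1 : Fin (m+2)).succAbove j : Fin (m+2)) : ℕ) = if (j:ℕ) = 0 then 0 else (j:ℕ)+1 := by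
  rw [val_succAbove]; rw [Fin.val_one]; split_ifs <;> omega

/-- minor (0,0) of `U_{m+2}` is `U_{m+1}` -/
lemma minU00 (m : ℕ) :
    (hessU s t (m+2)).submatrix (Fin.succAbove 0) Fin.succ = hessU s t (m+1) := by
  funext i j
  have hi := i.isLt
  have hj := j.isLt
  simp only [Matrix.submatrix_apply, hessU, val_succAbove, Fin.val_succ]; rw [Fin.val_zero]
  try simp only [Nat.succ_ne_zero, false_and, and_false, true_and, and_true, if_false, if_true]
  try split_ifs <;> first | rfl | omega | (exfalso; first | assumption | omega)

lemma minU10 (m : ℕ) :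
    (hessU s t (m+2)).submatrix (Fin.succAbove 1) Fin.succ = matV s t (m+1) := by
  funext i j
  have hi := i.isLt
  have hj := j.isLt
  simp only [Matrix.submatrix_apply, hessU, matV, val_succAbove_one, Fin.val_succ]
  try simp only [Nat.succ_ne_zero, false_and, and_false, true_and, and_true, if_false, if_true]
  try split_ifs <;> first | rfl | omega | (exfalso; first | assumption | omega)

lemma minV10 (m : ℕ) :
    (matV s t (m+2)).submatrix (Fin.succAbove 1) Fin.succ = hessU s t (m+1) := by
  funext i j
  have hi := i.isLt
  have hj := j.isLt
  simp only [Matrix.submatrix_apply, hessU, matV, val_succAbove_one, Fin.val_succ]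
  try simp only [Nat.succ_ne_zero, false_and, and_false, true_and, and_true, if_false, if_true]
  try split_ifs <;> first | rfl | omega | (exfalso; first | assumption | omega)

lemma detV (m : ℕ) : (matV s t (m+1)).det = -(s * detU s t m) := by
  match m with
  | 0 =>
    rw [Matrix.det_fin_one]
    simp [matV, detU]
  | Nat.succ k =>
    have e1 : detU s t (k+1) = (hessU s t (k+1)).det := if_neg (by omega)
    rw [det_expand_one _ (by simp [matV]) ?_, minV10]
    · have h10 : matV s t (k+2) 1 0 = s := by
        simp [matV, hessU]
      rw [h10, e1]
    · intro i hi
      simp only [matV, hessU]; rw [Fin.val_zero]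
      try simp only [Nat.succ_ne_zero, false_and, and_false, true_and, and_true, if_false, if_true]
      try split_ifs <;> first | rfl | omega | (exfalso; first | assumption | omega)

lemma detU_rec (m : ℕ) : detU s t (m+2) = t * detU s t (m+1) + s^2 * detU s t m := by
  have e2 : detU s t (m+2) = (hessU s t (m+2)).det := if_neg (by omega)
  have e1 : detU s t (m+1) = (hessU s t (m+1)).det := if_neg (by omega)
  rw [e2, e1, det_expand_two _ ?_, minU00, minU10]
  · have h00 : hessU s t (m+2) 0 0 = t := by simp [hessU]
    have h10 : hessU s t (m+2) 1 0 = s := by simp [hessU]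
    rw [h00, h10, detV]
    ring
  · intro i hi
    simp only [hessU]; rw [Fin.val_zero]
    try simp only [Nat.succ_ne_zero, false_and, and_false, true_and, and_true, if_false, if_true]
    try split_ifs <;> first | rfl | omega | (exfalso; first | assumption | omega)

lemma minC00 (m : ℕ) :
    (matC s t (m+3)).submatrix (Fin.succAbove 0) Fin.succ = matC s t (m+2) := by
  funext i j
  have hi := i.isLt
  have hj := j.isLt
  simp only [Matrix.submatrix_apply, matC, hessU, val_succAbove, Fin.val_succ]; rw [Fin.val_zero]
  try simp only [Nat.succ_ne_zero, false_and, and_false, true_and, and_true, if_false, if_true]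
  try split_ifs <;> first | rfl | omega | (exfalso; first | assumption | omega)

lemma minC10 (m : ℕ) :
    (matC s t (m+3)).submatrix (Fin.succAbove 1) Fin.succ = matVC s t (m+2) := by
  funext i j
  have hi := i.isLt
  have hj := j.isLt
  simp only [Matrix.submatrix_apply, matC, matVC, matV, hessU, val_succAbove_one, Fin.val_succ]
  try simp only [Nat.succ_ne_zero, false_and, and_false, true_and, and_true, if_false, if_true]
  try split_ifs <;> first | rfl | omega | (exfalso; first | assumption | omega)

lemma minVC10 (m : ℕ) :
    (matVC s t (m+3)).submatrix (Fin.succAbove 1) Fin.succ = matC s t (m+2) := by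
  funext i j
  have hi := i.isLt
  have hj := j.isLt
  simp only [Matrix.submatrix_apply, matC, matVC, matV, hessU, val_succAbove_one, Fin.val_succ]
  try simp only [Nat.succ_ne_zero, false_and, and_false, true_and, and_true, if_false, if_true]
  try split_ifs <;> first | rfl | omega | (exfalso; first | assumption | omega)

lemma detVC (m : ℕ) : (matVC s t (m+3)).det = -(s * (matC s t (m+2)).det) := by
  have v0 : ((0 : Fin (m+3)) : ℕ) = 0 := by simp
  have v1 : ((1 : Fin (m+3)) : ℕ) = 1 := by simp
  have E := det_expand_one (m := m+1) (matVC s t (m+3)) ?_ ?_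
  · rw [E, minVC10]
    have h10 : matVC s t (m+3) 1 0 = s := by
      simp only [matVC, matV, hessU, v0, v1]
      try simp only [Nat.succ_ne_zero, false_and, and_false, true_and, and_true, if_false, if_true]
      try split_ifs <;> first | rfl | (exfalso; first | assumption | omega)
    rw [h10]
  · simp only [matVC, matV, v0]
    try simp only [Nat.succ_ne_zero, false_and, and_false, true_and, and_true, if_false, if_true]
    try split_ifs <;> first | rfl | (exfalso; first | assumption | omega)
  · intro i hi
    simp only [matVC, matV, hessU, v0]
    try simp only [Nat.succ_ne_zero, false_and, and_false, true_and, and_true, if_false, if_true]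
    try split_ifs <;> first | rfl | (exfalso; first | assumption | omega)

lemma detC_rec (m : ℕ) :
    (matC s t (m+4)).det = t * (matC s t (m+3)).det + s^2 * (matC s t (m+2)).det := by
  have v0 : ((0 : Fin (m+4)) : ℕ) = 0 := by simp
  have v1 : ((1 : Fin (m+4)) : ℕ) = 1 := by simp
  have E := det_expand_two (m := m+2) (matC s t (m+4)) ?_
  · rw [E]
    have h00 : matC s t (m+4) 0 0 = t := by
      simp only [matC, hessU, v0, v1]
      try simp only [Nat.succ_ne_zero, false_and, and_false, true_and, and_true, if_false, if_true]
      try split_ifs <;> first | rfl | (exfalso; first | assumption | omega)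
    have h10 : matC s t (m+4) 1 0 = s := by
      simp only [matC, hessU, v0, v1]
      try simp only [Nat.succ_ne_zero, false_and, and_false, true_and, and_true, if_false, if_true]
      try split_ifs <;> first | rfl | (exfalso; first | assumption | omega)
    rw [h00, h10, minC00, minC10, detVC]
    ring
  · intro i hi
    simp only [matC, hessU, v0]
    try simp only [Nat.succ_ne_zero, false_and, and_false, true_and, and_true, if_false, if_true]
    try split_ifs <;> first | rfl | (exfalso; first | assumption | omega)

lemma detC_formula : ∀ m : ℕ,
    (matC s t (m+2)).det = s * detU s t (m+1) + t * s * detU s t m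
  | 0 => by
    rw [Matrix.det_fin_two]
    have detU1 : detU s t 1 = t := by
      rw [detU, if_neg one_ne_zero, Matrix.det_fin_one]; simp [hessU]
    rw [detU1, detU, if_pos rfl]
    simp [matC, hessU]
    ring
  | 1 => by
    rw [Matrix.det_fin_three]
    have detU1 : detU s t 1 = t := by
      rw [detU, if_neg one_ne_zero, Matrix.det_fin_one]; simp [hessU]
    have detU2 : detU s t 2 = t * t := by
      rw [detU, if_neg (by omega), Matrix.det_fin_two]
      simp [hessU]
    rw [detU1, detU2]
    simp [matC, hessU]
    ring
  | (m+2) => by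
    have r := detC_rec s t m
    have f1 := detC_formula (m+1)
    have f0 := detC_formula m
    have u1 := detU_rec s t (m+1)
    have u0 := detU_rec s t m
    rw [show m+2+2 = m+4 from rfl, r, f1, f0]
    linear_combination (-s) * u1 + (-(s*t)) * u0

lemma minB00 (m : ℕ) :
    (matB s t (m+4)).submatrix (Fin.succAbove 0) Fin.succ = matC s t (m+3) := by
  have v0 : ((0 : Fin (m+4)) : ℕ) = 0 := by simp
  funext i j
  have hi := i.isLt
  have hj := j.isLt
  simp only [Matrix.submatrix_apply, matB, matC, hessU, val_succAbove, Fin.val_succ, v0]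
  try simp only [Nat.succ_ne_zero, false_and, and_false, true_and, and_true, if_false, if_true]
  try split_ifs <;> first | rfl | omega | (exfalso; first | assumption | omega)

lemma minB10 (m : ℕ) :
    (matB s t (m+4)).submatrix (Fin.succAbove 1) Fin.succ = matVC s t (m+3) := by
  funext i j
  have hi := i.isLt
  have hj := j.isLt
  simp only [Matrix.submatrix_apply, matB, matVC, matV, hessU, val_succAbove_one, Fin.val_succ]
  try simp only [Nat.succ_ne_zero, false_and, and_false, true_and, and_true, if_false, if_true]
  try split_ifs <;> first | rfl | omega | (exfalso; first | assumption | omega)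

lemma detB (m : ℕ) :
    (matB s t (m+4)).det =
      s^2 * detU s t (m+2) + 2 * t * s^2 * detU s t (m+1) + t^2 * s^2 * detU s t m := by
  have v0 : ((0 : Fin (m+4)) : ℕ) = 0 := by simp
  have v1 : ((1 : Fin (m+4)) : ℕ) = 1 := by simp
  have E := det_expand_two (m := m+2) (matB s t (m+4)) ?_
  · rw [E]
    have h00 : matB s t (m+4) 0 0 = s := by
      simp only [matB, v0, v1]
      try simp only [Nat.succ_ne_zero, false_and, and_false, true_and, and_true, if_false, if_true]
      try split_ifs <;> first | rfl | (exfalso; first | assumption | omega)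
    have h10 : matB s t (m+4) 1 0 = t := by
      simp only [matB, v0, v1]
      try simp only [Nat.succ_ne_zero, false_and, and_false, true_and, and_true, if_false, if_true]
      try split_ifs <;> first | rfl | (exfalso; first | assumption | omega)
    have f1 := detC_formula s t (m+1)
    have f0 := detC_formula s t m
    rw [h00, h10, minB00, minB10, detVC, f1, f0]
    ring
  · intro i hi
    simp only [matB, hessU, v0]
    try simp only [Nat.succ_ne_zero, false_and, and_false, true_and, and_true, if_false, if_true]
    try split_ifs <;> first | rfl | (exfalso; first | assumption | omega)

/-! ### The permutation matrices -/

lemma permR_eq (m : ℕ) :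
    permR (m+4) = (Equiv.swap (0 : Fin (m+4)) 1).permMatrix ℝ := by
  have v0 : ((0 : Fin (m+4)) : ℕ) = 0 := by simp
  have v1 : ((1 : Fin (m+4)) : ℕ) = 1 := by simp
  funext i j
  have hi := i.isLt
  have hj := j.isLt
  simp only [Equiv.Perm.permMatrix, PEquiv.toMatrix_apply, Equiv.toPEquiv_apply,
    Option.mem_def, Option.some.injEq]
  by_cases h0 : i = 0
  · subst h0
    rw [Equiv.swap_apply_left]
    simp only [permR, v0, v1, Fin.ext_iff]
    norm_num
    try split_ifs <;> first | rfl | omega | (exfalso; omega)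
  · by_cases h1 : i = 1
    · subst h1
      rw [Equiv.swap_apply_right]
      simp only [permR, v0, v1, Fin.ext_iff]
      norm_num
      try split_ifs <;> first | rfl | omega | (exfalso; omega)
    · rw [Equiv.swap_apply_of_ne_of_ne h0 h1]
      have h0' : (i : ℕ) ≠ 0 := fun h => h0 (by rw [Fin.ext_iff, v0]; exact h)
      have h1' : (i : ℕ) ≠ 1 := fun h => h1 (by rw [Fin.ext_iff, v1]; exact h)
      simp only [permR, Fin.ext_iff]
      split_ifs <;> first | rfl | omega | (exfalso; omega)

lemma permC_eq (m : ℕ) :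
    permC (m+4) =
      (Equiv.swap (⟨m+2, by omega⟩ : Fin (m+4)) ⟨m+3, by omega⟩).permMatrix ℝ := by
  funext i j
  have hi := i.isLt
  have hj := j.isLt
  simp only [Equiv.Perm.permMatrix, PEquiv.toMatrix_apply, Equiv.toPEquiv_apply,
    Option.mem_def, Option.some.injEq]
  by_cases h0 : i = (⟨m+2, by omega⟩ : Fin (m+4))
  · rw [h0, Equiv.swap_apply_left]
    simp only [permC, Fin.ext_iff]
    norm_num
    try split_ifs <;> first | rfl | omega | (exfalso; omega)
  · by_cases h1 : i = (⟨m+3, by omega⟩ : Fin (m+4))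
    · rw [h1, Equiv.swap_apply_right]
      simp only [permC, Fin.ext_iff]
      norm_num
      try split_ifs <;> first | rfl | omega | (exfalso; omega)
    · rw [Equiv.swap_apply_of_ne_of_ne h0 h1]
      have h0' : (i : ℕ) ≠ m+2 := fun h => h0 (by rw [Fin.ext_iff]; exact h)
      have h1' : (i : ℕ) ≠ m+3 := fun h => h1 (by rw [Fin.ext_iff]; exact h)
      simp only [permC, Fin.ext_iff]
      norm_num
      try split_ifs <;> first | rfl | omega | (exfalso; omega)

end aux

theorem det_hessUrc (s t : ℝ) :
    ∀ n : ℕ, 4 ≤ n →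
      (hessUrc s t n).det =
        s ^ 2 * detU s t (n - 2) + 2 * t * s ^ 2 * detU s t (n - 3) +
          t ^ 2 * s ^ 2 * detU s t (n - 4) := by
  intro n hn
  obtain ⟨m, rfl⟩ : ∃ m, n = m + 4 := ⟨n - 4, by omega⟩
  rw [show m+4-2 = m+2 from by omega, show m+4-3 = m+1 from by omega,
    show m+4-4 = m from by omega]
  have h01 : (0 : Fin (m+4)) ≠ 1 := by simp [Fin.ext_iff]
  have hc : (⟨m+2, by omega⟩ : Fin (m+4)) ≠ ⟨m+3, by omega⟩ := by simp [Fin.ext_iff]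
  rw [hessUrc, Matrix.det_mul, Matrix.det_mul, permR_eq, permC_eq,
    Matrix.det_permutation, Matrix.det_permutation,
    Equiv.Perm.sign_swap h01, Equiv.Perm.sign_swap hc, detB]
  simp
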